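/- Let L ≥ 1 and let y_2 ∈ ℂ^{2L+1} be the vector with y_2[0] = y_2[L] = y_2[2L] = 1 and y_2[n] = 0 otherwise, so that Σ_{n=0}^{2L} y_2[n]·η^n = 1 + η^L + η^{2L}. If y' ∈ ℂ^{2L+1} satisfies |Σ_{n=0}^{2L} y'[n]·η^n| = |1 + η^L + η^{2L}| for every η ∈ S¹, then y' = e^{iθ}·y_2 for some real θ. -/

import Mathlib

open Complex BigOperators Polynomial Finset

lemma circle_infinite : {z : ℂ | ‖z‖ = 1}.Infinite := by
  apply Set.infinite_of_injective_forall_mem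
    (f := fun n : ℕ => Complex.exp ((1/(n+1) : ℝ) * Complex.I))
  case hi =>
    intro a b hab
    simp only at hab
    rw [Complex.exp_eq_exp_iff_exists_int] at hab
    obtain ⟨k, hk⟩ := hab
    have hk' : (1/(a+1) : ℝ) = (1/(b+1) : ℝ) + k * (2 * Real.pi) := by
      have hk2 : (((1/(a+1):ℝ)):ℂ) * Complex.I
          = (((1/(b+1) + k*(2*Real.pi) : ℝ)):ℂ) * Complex.I := by
        rw [hk]; push_cast; ring
      have h3 := congrArg Complex.im hk2
      simpa only [Complex.mul_im, Complex.ofReal_re, Complex.ofReal_im,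
        Complex.I_im, Complex.I_re, mul_one, mul_zero, add_zero, zero_mul] using h3
    have hpi := Real.pi_gt_three
    have ha1 : (0:ℝ) < 1/(a+1) := by positivity
    have hb1 : (0:ℝ) < 1/(b+1) := by positivity
    have ha2 : (1/(a+1) : ℝ) ≤ 1 := by
      rw [div_le_one (by positivity)]; exact by norm_num
    have hb2 : (1/(b+1) : ℝ) ≤ 1 := by
      rw [div_le_one (by positivity)]; exact by norm_num
    have hk0 : k = 0 := by
      rcases lt_trichotomy k 0 with h | h | h
      · have hk1 : k ≤ -1 := by omega
        have : (k:ℝ) ≤ -1 := by exact_mod_cast hk1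
        nlinarith
      · exact h
      · have : (1:ℝ) ≤ k := by exact_mod_cast h
        nlinarith
    rw [hk0] at hk'
    push_cast at hk'
    field_simp at hk'
    have hba : b = a := by simp at hk'; exact_mod_cast hk'
    omega
  case hf =>
    intro n
    show ‖_‖ = 1
    exact Complex.norm_exp_ofReal_mul_I _

lemma coeff_double (N d : ℕ) (a : ℕ → ℕ → ℂ) (k : ℕ) :
    (∑ n ∈ Finset.range N, ∑ m ∈ Finset.range N,
      Polynomial.C (a n m) * Polynomial.X ^ (n + (d - m))).coeff k
    = ∑ n ∈ Finset.range N, ∑ m ∈ Finset.range N,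
        (if n + (d - m) = k then a n m else 0) := by
  simp [Polynomial.finset_sum_coeff, Polynomial.coeff_C_mul, Polynomial.coeff_X_pow, eq_comm]

lemma pow_split {η : ℂ} (hη : η * (starRingEnd ℂ) η = 1) {m d : ℕ} (hm : m ≤ d) (n : ℕ) :
    η ^ (n + (d - m)) = η ^ n * ((starRingEnd ℂ) η) ^ m * η ^ d := by
  have hne : η ≠ 0 := by
    intro h0; rw [h0] at hη; simp at hη
  apply mul_right_cancel₀ (pow_ne_zero m hne)
  have h1 : n + (d - m) + m = n + d := by omega
  have hcm : ((starRingEnd ℂ) η) ^ m * η ^ m = 1 := by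
    rw [← mul_pow, mul_comm, hη, one_pow]
  have key : η ^ n * ((starRingEnd ℂ) η) ^ m * η ^ d * η ^ m = η ^ (n + d) := by
    calc η ^ n * ((starRingEnd ℂ) η) ^ m * η ^ d * η ^ m
        = η ^ n * η ^ d * (((starRingEnd ℂ) η) ^ m * η ^ m) := by ring
      _ = η ^ n * η ^ d := by rw [hcm, mul_one]
      _ = η ^ (n + d) := by rw [← pow_add]
  calc η ^ (n + (d - m)) * η ^ m = η ^ (n + d) := by rw [← pow_add, h1]
    _ = η ^ n * ((starRingEnd ℂ) η) ^ m * η ^ d * η ^ m := key.symm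

lemma vsum {L : ℕ} (hL : 1 ≤ L) (f : ℕ → ℂ) :
    ∑ m ∈ Finset.range (2*L+1),
      (if m = 0 ∨ m = L ∨ m = 2*L then (1:ℂ) else 0) * f m
    = f 0 + f L + f (2*L) := by
  have hsplit : ∀ m ∈ Finset.range (2*L+1),
      (if m = 0 ∨ m = L ∨ m = 2*L then (1:ℂ) else 0) * f m
      = (if m = 0 then f m else 0) + (if m = L then f m else 0)
        + (if m = 2*L then f m else 0) := by
    intro m _
    by_cases h0 : m = 0
    · subst h0
      have hL0 : ¬(0 = L) := by omega
      have h2L0 : ¬(0 = 2*L) := by omega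
      simp [hL0, h2L0]
    · by_cases h1 : m = L
      · have e0 : ¬(L = 0) := by omega
        have e2 : ¬(L = 2*L) := by omega
        rw [h1]
        simp [e0, e2]
      · by_cases h2 : m = 2*L
        · have e0 : ¬(2*L = 0) := by omega
          have e1 : ¬(2*L = L) := by omega
          rw [h2]
          simp [e0, e1]
        · simp [h0, h1, h2]
  rw [Finset.sum_congr rfl hsplit]
  rw [Finset.sum_add_distrib, Finset.sum_add_distrib]
  rw [Finset.sum_ite_eq' (Finset.range (2*L+1)) 0 f,
      Finset.sum_ite_eq' (Finset.range (2*L+1)) L f,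
      Finset.sum_ite_eq' (Finset.range (2*L+1)) (2*L) f]
  have h0 : (0:ℕ) ∈ Finset.range (2*L+1) := Finset.mem_range.mpr (by omega)
  have hl : L ∈ Finset.range (2*L+1) := Finset.mem_range.mpr (by omega)
  have h2l : 2*L ∈ Finset.range (2*L+1) := Finset.mem_range.mpr (by omega)
  rw [if_pos h0, if_pos hl, if_pos h2l]

lemma corr_k2L {L : ℕ} (t : ℕ → ℕ → ℂ) :
    (∑ n ∈ Finset.range (2*L+1), ∑ m ∈ Finset.range (2*L+1),
      (if n + (2*L - m) = 2*L then t n m else 0))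
    = ∑ n ∈ Finset.range (2*L+1), t n n := by
  apply Finset.sum_congr rfl
  intro n hn
  have hn' : n < 2*L+1 := Finset.mem_range.mp hn
  have hstep : ∀ m ∈ Finset.range (2*L+1),
      (if n + (2*L - m) = 2*L then t n m else 0) = (if m = n then t n m else 0) := by
    intro m hm
    have hm' : m < 2*L+1 := Finset.mem_range.mp hm
    exact if_congr (by omega) rfl rfl
  rw [Finset.sum_congr rfl hstep, Finset.sum_ite_eq' (Finset.range (2*L+1)) n (t n),
    if_pos hn]

lemma corr_k4L {L : ℕ} (hL : 1 ≤ L) (t : ℕ → ℕ → ℂ) :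
    (∑ n ∈ Finset.range (2*L+1), ∑ m ∈ Finset.range (2*L+1),
      (if n + (2*L - m) = 4*L then t n m else 0))
    = t (2*L) 0 := by
  have hstep : ∀ n ∈ Finset.range (2*L+1),
      (∑ m ∈ Finset.range (2*L+1), if n + (2*L - m) = 4*L then t n m else 0)
      = (if n = 2*L then t n 0 else 0) := by
    intro n hn
    have hn' : n < 2*L+1 := Finset.mem_range.mp hn
    by_cases h2 : n = 2*L
    · rw [if_pos h2]
      have : ∀ m ∈ Finset.range (2*L+1),
          (if n + (2*L - m) = 4*L then t n m else 0) = (if m = 0 then t n m else 0) := by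
        intro m hm
        have hm' : m < 2*L+1 := Finset.mem_range.mp hm
        exact if_congr (by omega) rfl rfl
      rw [Finset.sum_congr rfl this, Finset.sum_ite_eq' (Finset.range (2*L+1)) 0 (t n),
        if_pos (Finset.mem_range.mpr (by omega) : (0:ℕ) ∈ Finset.range (2*L+1))]
    · rw [if_neg h2]
      apply Finset.sum_eq_zero
      intro m hm
      have hm' : m < 2*L+1 := Finset.mem_range.mp hm
      rw [if_neg (by omega)]
  rw [Finset.sum_congr rfl hstep,
    Finset.sum_ite_eq' (Finset.range (2*L+1)) (2*L) (fun n => t n 0),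
    if_pos (Finset.mem_range.mpr (by omega) : 2*L ∈ Finset.range (2*L+1))]

lemma corr_k3L {L : ℕ} (hL : 1 ≤ L) (t : ℕ → ℕ → ℂ) :
    (∑ n ∈ Finset.range (2*L+1), ∑ m ∈ Finset.range (2*L+1),
      (if n + (2*L - m) = 3*L then t n m else 0))
    = ∑ m ∈ Finset.range (L+1), t (m+L) m := by
  have hstep : ∀ n ∈ Finset.range (2*L+1),
      (∑ m ∈ Finset.range (2*L+1), if n + (2*L - m) = 3*L then t n m else 0)
      = (if L ≤ n then t n (n - L) else 0) := by
    intro n hn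
    have hn' : n < 2*L+1 := Finset.mem_range.mp hn
    by_cases hLn : L ≤ n
    · rw [if_pos hLn]
      have : ∀ m ∈ Finset.range (2*L+1),
          (if n + (2*L - m) = 3*L then t n m else 0)
          = (if m = n - L then t n m else 0) := by
        intro m hm
        have hm' : m < 2*L+1 := Finset.mem_range.mp hm
        exact if_congr (by omega) rfl rfl
      rw [Finset.sum_congr rfl this,
        Finset.sum_ite_eq' (Finset.range (2*L+1)) (n-L) (t n),
        if_pos (Finset.mem_range.mpr (by omega) : n - L ∈ Finset.range (2*L+1))]
    · rw [if_neg hLn]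
      apply Finset.sum_eq_zero
      intro m hm
      have hm' : m < 2*L+1 := Finset.mem_range.mp hm
      rw [if_neg (by omega)]
  rw [Finset.sum_congr rfl hstep]
  rw [Finset.range_eq_Ico, ← Finset.sum_Ico_consecutive _ (Nat.zero_le L) (by omega : L ≤ 2*L+1)]
  have hlow : ∑ n ∈ Finset.Ico 0 L, (if L ≤ n then t n (n - L) else 0) = 0 := by
    apply Finset.sum_eq_zero
    intro n hn
    rw [if_neg (by simp at hn; omega)]
  have hhigh : ∑ n ∈ Finset.Ico L (2*L+1), (if L ≤ n then t n (n - L) else 0)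
      = ∑ n ∈ Finset.Ico L (2*L+1), t n (n - L) := by
    apply Finset.sum_congr rfl
    intro n hn
    rw [if_pos (by simp at hn; omega)]
  rw [hlow, hhigh, zero_add]
  rw [Finset.sum_Ico_eq_sum_range]
  have : 2*L+1 - L = L+1 := by omega
  rw [this]
  apply Finset.sum_congr rfl
  intro k _
  rw [show L + k - L = k from by omega, Nat.add_comm L k]

lemma eval_corr {N d : ℕ} (hd : ∀ m, m < N → m ≤ d) (u : ℕ → ℂ) {η : ℂ}
    (hη : η * (starRingEnd ℂ) η = 1) :
    Polynomial.eval η (∑ n ∈ Finset.range N, ∑ m ∈ Finset.range N,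
      Polynomial.C (u n * (starRingEnd ℂ) (u m)) * Polynomial.X ^ (n + (d - m)))
    = η ^ d * ((Complex.normSq (∑ n ∈ Finset.range N, u n * η ^ n) : ℝ) : ℂ) := by
  have hconj : (starRingEnd ℂ) (∑ n ∈ Finset.range N, u n * η ^ n)
      = ∑ m ∈ Finset.range N, (starRingEnd ℂ) (u m) * ((starRingEnd ℂ) η) ^ m := by
    rw [map_sum]
    exact Finset.sum_congr rfl fun m _ => by rw [map_mul, map_pow]
  calc Polynomial.eval η (∑ n ∈ Finset.range N, ∑ m ∈ Finset.range N,
        Polynomial.C (u n * (starRingEnd ℂ) (u m)) * Polynomial.X ^ (n + (d - m)))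
      = ∑ n ∈ Finset.range N, ∑ m ∈ Finset.range N,
          (u n * (starRingEnd ℂ) (u m)) * η ^ (n + (d - m)) := by
        simp [Polynomial.eval_finset_sum]
    _ = ∑ n ∈ Finset.range N, ∑ m ∈ Finset.range N,
          (u n * η ^ n) * ((starRingEnd ℂ) (u m) * ((starRingEnd ℂ) η) ^ m) * η ^ d := by
        refine Finset.sum_congr rfl fun n _ => Finset.sum_congr rfl fun m hm => ?_
        rw [pow_split hη (hd m (Finset.mem_range.mp hm)) n]; ring
    _ = ((∑ n ∈ Finset.range N, u n * η ^ n) *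
          (∑ m ∈ Finset.range N, (starRingEnd ℂ) (u m) * ((starRingEnd ℂ) η) ^ m)) * η ^ d := by
        simp only [Finset.sum_mul, Finset.mul_sum]
        exact Finset.sum_comm
    _ = η ^ d * ((∑ n ∈ Finset.range N, u n * η ^ n) *
          (starRingEnd ℂ) (∑ n ∈ Finset.range N, u n * η ^ n)) := by rw [hconj]; ring
    _ = η ^ d * ((Complex.normSq (∑ n ∈ Finset.range N, u n * η ^ n) : ℝ) : ℂ) := by
        rw [Complex.mul_conj]

lemma corr_eq {L : ℕ} (u v : ℕ → ℂ)
    (habs : ∀ η : ℂ, ‖η‖ = 1 →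
      ‖∑ n ∈ Finset.range (2*L+1), u n * η ^ n‖
      = ‖∑ n ∈ Finset.range (2*L+1), v n * η ^ n‖) (k : ℕ) :
    (∑ n ∈ Finset.range (2*L+1), ∑ m ∈ Finset.range (2*L+1),
      (if n + (2*L - m) = k then u n * (starRingEnd ℂ) (u m) else 0))
    = ∑ n ∈ Finset.range (2*L+1), ∑ m ∈ Finset.range (2*L+1),
      (if n + (2*L - m) = k then v n * (starRingEnd ℂ) (v m) else 0) := by
  have hd : ∀ m, m < 2*L+1 → m ≤ 2*L := by omega
  have hpq : (∑ n ∈ Finset.range (2*L+1), ∑ m ∈ Finset.range (2*L+1),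
        Polynomial.C (u n * (starRingEnd ℂ) (u m)) * Polynomial.X ^ (n + (2*L - m)))
      = ∑ n ∈ Finset.range (2*L+1), ∑ m ∈ Finset.range (2*L+1),
        Polynomial.C (v n * (starRingEnd ℂ) (v m)) * Polynomial.X ^ (n + (2*L - m)) := by
    apply Polynomial.eq_of_infinite_eval_eq
    apply Set.Infinite.mono _ circle_infinite
    intro η hη
    have hη' : ‖η‖ = 1 := hη
    have hη1 : η * (starRingEnd ℂ) η = 1 := by
      rw [Complex.mul_conj, Complex.normSq_eq_norm_sq, hη']
      norm_num
    simp only [Set.mem_setOf_eq]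
    rw [eval_corr hd u hη1, eval_corr hd v hη1]
    have hns : Complex.normSq (∑ n ∈ Finset.range (2*L+1), u n * η ^ n)
        = Complex.normSq (∑ n ∈ Finset.range (2*L+1), v n * η ^ n) := by
      rw [Complex.normSq_eq_norm_sq, Complex.normSq_eq_norm_sq, habs η hη']
    rw [hns]
  have := congrArg (fun r => Polynomial.coeff r k) hpq
  simpa only [Polynomial.finset_sum_coeff, Polynomial.coeff_C_mul,
    Polynomial.coeff_X_pow, mul_ite, mul_one, mul_zero, eq_comm] using this

set_option maxHeartbeats 1000000 in
/-- any vector `y' ∈ ℂ^{2L+1}` whose Fourier magnitudes on the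
unit circle agree with those of `1 + η^L + η^{2L}` is a global phase multiple
of the vector `y₂` with `y₂[0] = y₂[L] = y₂[2L] = 1` and zeros elsewhere. -/
theorem cyclotomic_vector_rigidity (L : ℕ) (hL : 1 ≤ L)
    (y₂ : Fin (2 * L + 1) → ℂ)
    (hy₂ : ∀ n : Fin (2 * L + 1),
      y₂ n = if (n : ℕ) = 0 ∨ (n : ℕ) = L ∨ (n : ℕ) = 2 * L then 1 else 0)
    (y' : Fin (2 * L + 1) → ℂ)
    (h : ∀ η : ℂ, ‖η‖ = 1 →
      ‖∑ n : Fin (2 * L + 1), y' n * η ^ (n : ℕ)‖ =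
      ‖1 + η ^ L + η ^ (2 * L)‖) :
    ∃ θ : ℝ, ∀ n, y' n = Complex.exp (θ * Complex.I) * y₂ n := by
  classical
  set u : ℕ → ℂ := fun n => if hn : n < 2*L+1 then y' ⟨n, hn⟩ else 0 with hu
  set v : ℕ → ℂ := fun n => if n = 0 ∨ n = L ∨ n = 2*L then 1 else 0 with hv
  have huy : ∀ i : Fin (2*L+1), y' i = u i := by
    intro i; simp [hu, i.isLt]; intro hi; exfalso; have := i.isLt; omega
  -- the magnitude hypothesis in range-sum form
  have habs : ∀ η : ℂ, ‖η‖ = 1 →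
      ‖∑ n ∈ Finset.range (2*L+1), u n * η ^ n‖
      = ‖∑ n ∈ Finset.range (2*L+1), v n * η ^ n‖ := by
    intro η hη
    have h1 : ∑ n ∈ Finset.range (2*L+1), u n * η ^ n
        = ∑ n : Fin (2*L+1), y' n * η ^ (n : ℕ) := by
      rw [← Fin.sum_univ_eq_sum_range (fun n => u n * η ^ n) (2*L+1)]
      exact Finset.sum_congr rfl fun i _ => by rw [huy i]
    have h2 : ∑ n ∈ Finset.range (2*L+1), v n * η ^ n = 1 + η ^ L + η ^ (2*L) := by
      have h3 := vsum hL (fun m : ℕ => η ^ m)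
      simp only [hv]
      simpa using h3
    rw [h1, h2]
    exact h η hη
  -- three correlation identities
  have huv := fun k => corr_eq u v habs k
  -- v-side values
  have hv2 : ∑ n ∈ Finset.range (2*L+1), v n * (starRingEnd ℂ) (v n) = 3 := by
    have hp : ∀ n ∈ Finset.range (2*L+1),
        v n * (starRingEnd ℂ) (v n) = (if n = 0 ∨ n = L ∨ n = 2*L then (1:ℂ) else 0)
          * (fun _ : ℕ => (1:ℂ)) n := by
      intro n _
      by_cases hP : (n = 0 ∨ n = L ∨ n = 2*L) <;> simp [hv, hP]
    rw [Finset.sum_congr rfl hp, vsum hL (fun _ : ℕ => (1:ℂ))]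
    norm_num
  have hv4 : v (2*L) * (starRingEnd ℂ) (v 0) = 1 := by
    simp [hv]
  have hv3 : ∑ m ∈ Finset.range (L+1), v (m+L) * (starRingEnd ℂ) (v m) = 2 := by
    have hp : ∀ m ∈ Finset.range (L+1),
        v (m+L) * (starRingEnd ℂ) (v m)
        = (if m = 0 then (1:ℂ) else 0) + (if m = L then (1:ℂ) else 0) := by
      intro m hm
      have hm' : m < L + 1 := Finset.mem_range.mp hm
      by_cases h0 : m = 0
      · subst h0
        have c1 : (0+L = 0 ∨ 0+L = L ∨ 0+L = 2*L) := by omega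
        have c2 : ((0:ℕ) = 0 ∨ 0 = L ∨ 0 = 2*L) := by omega
        have cL : ¬((0:ℕ) = L) := by omega
        simp [hv, c1, c2, cL]
      · by_cases h1 : m = L
        · have c1 : (m+L = 0 ∨ m+L = L ∨ m+L = 2*L) := by omega
          have c2 : (m = 0 ∨ m = L ∨ m = 2*L) := by omega
          have d1 : (L = 0 ∨ L + L = 2*L) := by omega
          have d2 : ¬(L = 0) := by omega
          simp [hv, c1, c2, h0, h1, d1, d2]
          omega
        · have c2 : ¬(m = 0 ∨ m = L ∨ m = 2*L) := by omega
          simp only [hv]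
          simp [h0, h1]
          omega
    rw [Finset.sum_congr rfl hp, Finset.sum_add_distrib,
      Finset.sum_ite_eq' (Finset.range (L+1)) 0 (fun _ => (1:ℂ)),
      Finset.sum_ite_eq' (Finset.range (L+1)) L (fun _ => (1:ℂ)),
      if_pos (Finset.mem_range.mpr (by omega) : (0:ℕ) ∈ Finset.range (L+1)),
      if_pos (Finset.mem_range.mpr (by omega) : L ∈ Finset.range (L+1))]
    norm_num
  -- u-side identities
  have A2 : ∑ n ∈ Finset.range (2*L+1), u n * (starRingEnd ℂ) (u n) = 3 := by
    have := huv (2*L)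
    rw [corr_k2L, corr_k2L] at this
    rw [this, hv2]
  have A4 : u (2*L) * (starRingEnd ℂ) (u 0) = 1 := by
    have := huv (4*L)
    rw [corr_k4L hL, corr_k4L hL] at this
    rw [this, hv4]
  have A3 : ∑ m ∈ Finset.range (L+1), u (m+L) * (starRingEnd ℂ) (u m) = 2 := by
    have := huv (3*L)
    rw [corr_k3L hL, corr_k3L hL] at this
    rw [this, hv3]
  -- real quantities
  set s : ℕ → ℝ := fun n => Complex.normSq (u n) with hs
  have hs_nonneg : ∀ n, 0 ≤ s n := fun n => Complex.normSq_nonneg _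
  have hsum : ∑ n ∈ Finset.range (2*L+1), s n = 3 := by
    have hc : ((∑ n ∈ Finset.range (2*L+1), s n : ℝ) : ℂ) = 3 := by
      push_cast
      rw [← A2]
      exact Finset.sum_congr rfl fun n _ => (Complex.mul_conj (u n)).symm
    exact_mod_cast hc
  have hprod : s 0 * s (2*L) = 1 := by
    have hc := congrArg Complex.normSq A4
    simp only [Complex.normSq_mul, Complex.normSq_conj, Complex.normSq_one] at hc
    simp only [hs]
    rw [mul_comm]
    exact hc
  have habs3 : (2:ℝ) ≤ ∑ m ∈ Finset.range (L+1), (s (m+L) + s m) / 2 := by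
    calc (2:ℝ) = ‖∑ m ∈ Finset.range (L+1),
          u (m+L) * (starRingEnd ℂ) (u m)‖ := by rw [A3]; simp
      _ ≤ ∑ m ∈ Finset.range (L+1), ‖u (m+L) * (starRingEnd ℂ) (u m)‖ :=
          norm_sum_le _ _
      _ ≤ ∑ m ∈ Finset.range (L+1), (s (m+L) + s m) / 2 := by
          apply Finset.sum_le_sum
          intro m _
          rw [norm_mul, Complex.norm_conj]
          have ha := Complex.normSq_eq_norm_sq (u (m+L))
          have hb := Complex.normSq_eq_norm_sq (u m)
          have h1 : s (m+L) = ‖u (m+L)‖ ^ 2 := by rw [hs]; exact ha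
          have h2 : s m = ‖u m‖ ^ 2 := by rw [hs]; exact hb
          rw [h1, h2]
          nlinarith [sq_nonneg (‖u (m+L)‖ - ‖u m‖)]
  have hsplit : ∑ m ∈ Finset.range (L+1), (s (m+L) + s m) / 2 = (s L + 3) / 2 := by
    have e1 : ∑ m ∈ Finset.range (L+1), (s (m+L) + s m) / 2
        = (∑ m ∈ Finset.range (L+1), s (m+L) + ∑ m ∈ Finset.range (L+1), s m) / 2 := by
      rw [← Finset.sum_add_distrib, Finset.sum_div]
    have e2 : ∑ m ∈ Finset.range (L+1), s (m+L) = ∑ n ∈ Finset.Ico L (2*L+1), s n := by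
      rw [Finset.sum_Ico_eq_sum_range, show 2*L+1 - L = L+1 from by omega]
      exact Finset.sum_congr rfl fun m _ => by rw [Nat.add_comm L m]
    have e3 : ∑ n ∈ Finset.Ico L (2*L+1), s n
        = s L + ∑ n ∈ Finset.Ico (L+1) (2*L+1), s n :=
      Finset.sum_eq_sum_Ico_succ_bot (by omega) _
    have e4 : ∑ m ∈ Finset.range (L+1), s m + ∑ n ∈ Finset.Ico (L+1) (2*L+1), s n
        = ∑ n ∈ Finset.range (2*L+1), s n := by
      rw [Finset.range_eq_Ico, Finset.range_eq_Ico]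
      exact Finset.sum_Ico_consecutive s (Nat.zero_le (L+1)) (by omega : L+1 ≤ 2*L+1)
    rw [e1, e2, e3]
    rw [hsum] at e4
    linarith
  have hsLge : (1:ℝ) ≤ s L := by
    rw [hsplit] at habs3
    linarith
  have hsub : ({0, L, 2*L} : Finset ℕ) ⊆ Finset.range (2*L+1) := by
    intro x hx
    simp only [Finset.mem_insert, Finset.mem_singleton] at hx
    exact Finset.mem_range.mpr (by omega)
  have hsdiff := Finset.sum_sdiff (f := s) hsub
  have hset : ∑ n ∈ ({0, L, 2*L} : Finset ℕ), s n = s 0 + s L + s (2*L) := by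
    rw [Finset.sum_insert (by simp only [Finset.mem_insert, Finset.mem_singleton]; omega),
      Finset.sum_insert (by simp only [Finset.mem_singleton]; omega),
      Finset.sum_singleton]
    ring
  have hR0 : 0 ≤ ∑ n ∈ Finset.range (2*L+1) \ ({0, L, 2*L} : Finset ℕ), s n :=
    Finset.sum_nonneg fun n _ => hs_nonneg n
  have h02ge : 2 ≤ s 0 + s (2*L) := by
    nlinarith [hs_nonneg 0, hs_nonneg (2*L), sq_nonneg (s 0 - s (2*L)),
      sq_nonneg (s 0 + s (2*L) - 2)]
  have hRzero : ∑ n ∈ Finset.range (2*L+1) \ ({0, L, 2*L} : Finset ℕ), s n = 0 := by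
    rw [hset, hsum] at hsdiff
    linarith
  have hsL1 : s L = 1 := by
    rw [hset, hsum] at hsdiff
    linarith
  have h02 : s 0 + s (2*L) = 2 := by
    rw [hset, hsum] at hsdiff
    linarith
  have hs0 : s 0 = 1 := by nlinarith [sq_nonneg (s 0 - s (2*L))]
  have hs2L : s (2*L) = 1 := by linarith
  have hzero : ∀ n, n < 2*L+1 → ¬(n = 0 ∨ n = L ∨ n = 2*L) → u n = 0 := by
    intro n hn hnot
    have hmem : n ∈ Finset.range (2*L+1) \ ({0, L, 2*L} : Finset ℕ) := by
      simp only [Finset.mem_sdiff, Finset.mem_range, Finset.mem_insert, Finset.mem_singleton]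
      exact ⟨hn, hnot⟩
    have hz := (Finset.sum_eq_zero_iff_of_nonneg (fun n _ => hs_nonneg n)).mp hRzero n hmem
    rw [hs] at hz
    exact Complex.normSq_eq_zero.mp hz
  simp only [hs] at hs0 hsL1 hs2L
  have hcu0 : u 0 * (starRingEnd ℂ) (u 0) = 1 := by
    rw [Complex.mul_conj, hs0]
    norm_num
  have hcne : (starRingEnd ℂ) (u 0) ≠ 0 := by
    intro hc
    rw [hc, mul_zero] at hcu0
    exact one_ne_zero hcu0.symm
  have h2Leq0 : u (2*L) = u 0 := mul_right_cancel₀ hcne (by rw [A4, hcu0])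
  have hA3e : ∑ m ∈ Finset.range (L+1), u (m+L) * (starRingEnd ℂ) (u m)
      = u L * (starRingEnd ℂ) (u 0) + u (2*L) * (starRingEnd ℂ) (u L) := by
    have hp : ∀ m ∈ Finset.range (L+1), u (m+L) * (starRingEnd ℂ) (u m)
        = (if m = 0 then u L * (starRingEnd ℂ) (u 0) else 0)
          + (if m = L then u (2*L) * (starRingEnd ℂ) (u L) else 0) := by
      intro m hm
      have hm' : m < L + 1 := Finset.mem_range.mp hm
      by_cases h0 : m = 0
      · subst h0
        rw [zero_add, if_pos rfl, if_neg (by omega), add_zero]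
      · by_cases h1 : m = L
        · rw [h1, show L + L = 2*L from by omega, if_neg (by omega : ¬(L = 0)),
            if_pos rfl, zero_add]
        · have hmz : u m = 0 := hzero m (by omega) (by omega)
          rw [hmz, map_zero, mul_zero, if_neg h0, if_neg h1, add_zero]
    rw [Finset.sum_congr rfl hp, Finset.sum_add_distrib,
      Finset.sum_ite_eq' (Finset.range (L+1)) 0
        (fun _ => u L * (starRingEnd ℂ) (u 0)),
      Finset.sum_ite_eq' (Finset.range (L+1)) L
        (fun _ => u (2*L) * (starRingEnd ℂ) (u L)),
      if_pos (Finset.mem_range.mpr (by omega) : (0:ℕ) ∈ Finset.range (L+1)),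
      if_pos (Finset.mem_range.mpr (by omega) : L ∈ Finset.range (L+1))]
  have hA3' : u L * (starRingEnd ℂ) (u 0) + u 0 * (starRingEnd ℂ) (u L) = 2 := by
    have := hA3e.symm.trans A3
    rwa [h2Leq0] at this
  have w_eq : u L * (starRingEnd ℂ) (u 0)
      + (starRingEnd ℂ) (u L * (starRingEnd ℂ) (u 0)) = 2 := by
    rw [map_mul, Complex.conj_conj]
    linear_combination hA3'
  have hre : (u L * (starRingEnd ℂ) (u 0)).re = 1 := by
    rw [Complex.add_conj] at w_eq
    have : (2 * (u L * (starRingEnd ℂ) (u 0)).re : ℝ) = 2 := by exact_mod_cast w_eq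
    linarith
  have hnw : Complex.normSq (u L * (starRingEnd ℂ) (u 0)) = 1 := by
    rw [Complex.normSq_mul, Complex.normSq_conj, hsL1, hs0]
    norm_num
  have him : (u L * (starRingEnd ℂ) (u 0)).im = 0 := by
    rw [Complex.normSq_apply, hre] at hnw
    nlinarith
  have hw1 : u L * (starRingEnd ℂ) (u 0) = 1 := by
    apply Complex.ext
    · rw [hre, Complex.one_re]
    · rw [him, Complex.one_im]
  have hLeq0 : u L = u 0 := mul_right_cancel₀ hcne (by rw [hw1, hcu0])
  have habs0 : ‖u 0‖ = 1 := by
    have h1 := Complex.sq_norm (u 0)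
    nlinarith [norm_nonneg (u 0)]
  refine ⟨Complex.arg (u 0), ?_⟩
  have hexp : Complex.exp (↑(Complex.arg (u 0)) * Complex.I) = u 0 := by
    have hme := Complex.norm_mul_exp_arg_mul_I (u 0)
    rwa [habs0, Complex.ofReal_one, one_mul] at hme
  intro i
  rw [hy₂ i, huy i]
  by_cases hc : ((i:ℕ) = 0 ∨ (i:ℕ) = L ∨ (i:ℕ) = 2 * L)
  · rw [if_pos hc, mul_one, hexp]
    rcases hc with hcc | hcc | hcc
    · rw [hcc]
    · rw [hcc, hLeq0]
    · rw [hcc]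
      exact h2Leq0
  · rw [if_neg hc, mul_zero]
    exact hzero i i.isLt hc
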